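/- The module M_B is invariant under the order-5 rotation given by the matrix (1/2)·[[τ, −1, −τ'], [1, −τ', −τ], [−τ', τ, 1]] and under the order-2 rotation diag(−1, −1, 1); i.e., each of these matrices maps M_B onto itself. -/

import Mathlib

noncomputable def τ : ℝ := (1 + Real.sqrt 5) / 2

noncomputable def τ' : ℝ := 1 - τ

/-- The ring `ℤ[τ]`, as a subset of `ℝ`. -/
def Ztau : Set ℝ := {x | ∃ a b : ℤ, x = (a : ℝ) + (b : ℝ) * τ}

/-- The standard body-centred icosahedral module `M_B`. -/
def MB : Set (Fin 3 → ℝ) :=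
  {v | (∀ i, v i ∈ Ztau) ∧ ∃ w ∈ Ztau, τ ^ 2 * v 0 + τ * v 1 + v 2 = 2 * w}

/-- The order-5 rotation generating (together with `diag(-1,-1,1)`) the
icosahedral rotation group `Y`. -/
noncomputable def R5 : Matrix (Fin 3) (Fin 3) ℝ :=
  (1 / 2 : ℝ) • !![τ, -1, -τ'; 1, -τ', -τ; -τ', τ, 1]

/-- The order-2 rotation `diag(-1,-1,1)`. -/
def R2 : Matrix (Fin 3) (Fin 3) ℝ := !![-1, 0, 0; 0, -1, 0; 0, 0, 1]

lemma sqrt5_irr : Irrational (Real.sqrt 5) := by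
  simpa using (Nat.prime_five).irrational_sqrt

lemma tau_irr : Irrational τ := by
  have h := sqrt5_irr.ratCast_add 1
  have h2 := h.div_natCast (by norm_num : (2:ℕ) ≠ 0)
  simpa [τ] using h2

lemma tau_sq : τ ^ 2 = τ + 1 := by
  have h5 : Real.sqrt 5 ^ 2 = 5 := Real.sq_sqrt (by norm_num)
  unfold τ; nlinarith [h5]

lemma indep (p q : ℤ) (h : (p : ℝ) + (q : ℝ) * τ = 0) : p = 0 ∧ q = 0 := by
  have hq : q = 0 := by
    by_contra hq
    have : τ = (((-p : ℚ) / q : ℚ) : ℝ) := by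
      push_cast
      field_simp at h ⊢
      linarith
    exact tau_irr ⟨_, this.symm⟩
  subst hq
  simp at h
  exact ⟨by exact_mod_cast h, rfl⟩

lemma mem_mb (a0 b0 a1 b1 a2 b2 : ℤ) (v : Fin 3 → ℝ)
    (h0 : v 0 = (a0 : ℝ) + b0 * τ) (h1 : v 1 = (a1 : ℝ) + b1 * τ)
    (h2 : v 2 = (a2 : ℝ) + b2 * τ)
    (p1 : (a0 + b0 + b1 + a2) % 2 = 0)
    (p2 : (a0 + 2*b0 + a1 + b1 + b2) % 2 = 0) : v ∈ MB := by
  refine ⟨?_, ?_⟩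
  · intro i
    fin_cases i
    · exact ⟨a0, b0, h0⟩
    · exact ⟨a1, b1, h1⟩
    · exact ⟨a2, b2, h2⟩
  · set c : ℤ := (a0 + b0 + b1 + a2) / 2 with hc
    set d : ℤ := (a0 + 2*b0 + a1 + b1 + b2) / 2 with hd
    have hc2 : a0 + b0 + b1 + a2 = 2 * c := by omega
    have hd2 : a0 + 2*b0 + a1 + b1 + b2 = 2 * d := by omega
    refine ⟨(c : ℝ) + d * τ, ⟨c, d, rfl⟩, ?_⟩
    have hc2' : (a0 : ℝ) + b0 + b1 + a2 = 2 * c := by exact_mod_cast hc2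
    have hd2' : (a0 : ℝ) + 2*b0 + a1 + b1 + b2 = 2 * d := by exact_mod_cast hd2
    rw [h0, h1, h2]
    linear_combination ((a0:ℝ) + b0*τ + b0 + b1) * tau_sq + hc2' + τ * hd2'

lemma mb_data (v : Fin 3 → ℝ) (hv : v ∈ MB) :
    ∃ a0 b0 a1 b1 a2 b2 : ℤ,
      v 0 = (a0 : ℝ) + b0 * τ ∧ v 1 = (a1 : ℝ) + b1 * τ ∧ v 2 = (a2 : ℝ) + b2 * τ ∧
      (a0 + b0 + b1 + a2) % 2 = 0 ∧ (a0 + 2*b0 + a1 + b1 + b2) % 2 = 0 := by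
  obtain ⟨hco, w, ⟨c, d, hw⟩, heq⟩ := hv
  obtain ⟨a0, b0, h0⟩ := hco 0
  obtain ⟨a1, b1, h1⟩ := hco 1
  obtain ⟨a2, b2, h2⟩ := hco 2
  refine ⟨a0, b0, a1, b1, a2, b2, h0, h1, h2, ?_, ?_⟩
  all_goals {
    have key : ((a0 + b0 + b1 + a2 - 2*c : ℤ) : ℝ)
        + ((a0 + 2*b0 + a1 + b1 + b2 - 2*d : ℤ) : ℝ) * τ = 0 := by
      push_cast
      rw [h0, h1, h2, hw] at heq
      linear_combination heq - ((a0:ℝ) + b0*τ + b0 + b1) * tau_sq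
    obtain ⟨e1, e2⟩ := indep _ _ key
    omega }

lemma mulVec_R5 (v : Fin 3 → ℝ) :
    R5.mulVec v = ![(τ * v 0 - v 1 - τ' * v 2)/2, (v 0 - τ' * v 1 - τ * v 2)/2,
      (-τ' * v 0 + τ * v 1 + v 2)/2] := by
  funext i
  fin_cases i <;>
    simp [R5, Matrix.mulVec, dotProduct, Fin.sum_univ_three] <;> ring

lemma mulVec_R2 (v : Fin 3 → ℝ) :
    R2.mulVec v = ![-v 0, -v 1, v 2] := by
  funext i
  fin_cases i <;>
    simp [R2, Matrix.mulVec, dotProduct, Fin.sum_univ_three]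

/-- `M_B` is invariant under the order-5 rotation `R5` and the order-2
rotation `R2`: each maps `M_B` onto itself. -/
theorem MB_invariant :
    (fun v => R5.mulVec v) '' MB = MB ∧ (fun v => R2.mulVec v) '' MB = MB := by
  -- parity / coordinate data handling
  constructor
  · apply Set.Subset.antisymm
    · rintro _ ⟨v, hv, rfl⟩
      obtain ⟨a0, b0, a1, b1, a2, b2, h0, h1, h2, p1, p2⟩ := mb_data v hv
      set c : ℤ := (a0 + b0 + b1 + a2) / 2 with hc
      set d : ℤ := (a0 + 2*b0 + a1 + b1 + b2) / 2 with hd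
      have hc2 : a0 + b0 + b1 + a2 = 2 * c := by omega
      have hd2 : a0 + 2*b0 + a1 + b1 + b2 = 2 * d := by omega
      have hc2' : (a0 : ℝ) + b0 + b1 + a2 = 2 * c := by exact_mod_cast hc2
      have hd2' : (a0 : ℝ) + 2*b0 + a1 + b1 + b2 = 2 * d := by exact_mod_cast hd2
      refine mem_mb (c+d-a0-b0-a1-b1-a2) (c-b1) (d-b0-a1-b2)
        (c+d-a0-b0-b1-a2-b2) (c-a0) (d-b0) _ ?_ ?_ ?_ (by omega) (by omega)
      · show (R5.mulVec v) 0 = _; rw [mulVec_R5]; show (τ * v 0 - v 1 - τ' * v 2)/2 = _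
        rw [h0, h1, h2]; unfold τ'; push_cast
        linear_combination ((b0:ℝ)+b2)/2 * tau_sq + ((1:ℝ)/2 + τ/2) * hc2' + (1/2:ℝ) * hd2'
      · show (R5.mulVec v) 1 = _; rw [mulVec_R5]; show (v 0 - τ' * v 1 - τ * v 2)/2 = _
        rw [h0, h1, h2]; unfold τ'; push_cast
        linear_combination ((b1:ℝ)-b2)/2 * tau_sq + (τ/2) * hc2' + ((1:ℝ)/2 + τ/2) * hd2'
      · show (R5.mulVec v) 2 = _; rw [mulVec_R5]; show (-τ' * v 0 + τ * v 1 + v 2)/2 = _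
        rw [h0, h1, h2]; unfold τ'; push_cast
        linear_combination ((b0:ℝ)+b1)/2 * tau_sq + (1/2:ℝ) * hc2' + (τ/2) * hd2'
    · intro v hv
      obtain ⟨a0, b0, a1, b1, a2, b2, h0, h1, h2, p1, p2⟩ := mb_data v hv
      set c : ℤ := (a0 + b0 + b1 + a2) / 2 with hc
      set d : ℤ := (a0 + 2*b0 + a1 + b1 + b2) / 2 with hd
      have hc2 : a0 + b0 + b1 + a2 = 2 * c := by omega
      have hd2 : a0 + 2*b0 + a1 + b1 + b2 = 2 * d := by omega
      have hc2' : (a0 : ℝ) + b0 + b1 + a2 = 2 * c := by exact_mod_cast hc2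
      have hd2' : (a0 : ℝ) + 2*b0 + a1 + b1 + b2 = 2 * d := by exact_mod_cast hd2
      refine ⟨![(τ * v 0 + v 1 - τ' * v 2)/2, (-v 0 - τ' * v 1 + τ * v 2)/2,
        (-τ' * v 0 - τ * v 1 + v 2)/2], ?_, ?_⟩
      · refine mem_mb (c+d-a0-b0-b1-a2) c (d-a0-b0-a1) (c+d-a0-2*b0-b1)
          (c-a0-b1) (d-b0-a1-b1) _ ?_ ?_ ?_ (by omega) (by omega)
        · show (τ * v 0 + v 1 - τ' * v 2)/2 = _
          rw [h0, h1, h2]; unfold τ'; push_cast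
          linear_combination ((b0:ℝ)+b2)/2 * tau_sq + ((1:ℝ)/2 + τ/2) * hc2' + (1/2:ℝ) * hd2'
        · show (-v 0 - τ' * v 1 + τ * v 2)/2 = _
          rw [h0, h1, h2]; unfold τ'; push_cast
          linear_combination ((b1:ℝ)+b2)/2 * tau_sq + (τ/2) * hc2' + ((1:ℝ)/2 + τ/2) * hd2'
        · show (-τ' * v 0 - τ * v 1 + v 2)/2 = _
          rw [h0, h1, h2]; unfold τ'; push_cast
          linear_combination ((b0:ℝ)-b1)/2 * tau_sq + (1/2:ℝ) * hc2' + (τ/2) * hd2'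
      · show R5.mulVec _ = v
        rw [mulVec_R5]
        funext i
        fin_cases i <;> simp [τ']
        · linear_combination ((2*v 0 - v 1 + v 2)/4) * tau_sq
        · linear_combination ((-v 0 + 2*v 1 + v 2)/4) * tau_sq
        · linear_combination ((v 0 + v 1 + 2*v 2)/4) * tau_sq
  · apply Set.Subset.antisymm
    · rintro _ ⟨v, hv, rfl⟩
      obtain ⟨a0, b0, a1, b1, a2, b2, h0, h1, h2, p1, p2⟩ := mb_data v hv
      refine mem_mb (-a0) (-b0) (-a1) (-b1) a2 b2 _ ?_ ?_ ?_ (by omega) (by omega)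
      · show (R2.mulVec v) 0 = _; rw [mulVec_R2]; show -v 0 = _; rw [h0]; push_cast; ring
      · show (R2.mulVec v) 1 = _; rw [mulVec_R2]; show -v 1 = _; rw [h1]; push_cast; ring
      · show (R2.mulVec v) 2 = _; rw [mulVec_R2]; show v 2 = _; rw [h2]
    · intro v hv
      obtain ⟨a0, b0, a1, b1, a2, b2, h0, h1, h2, p1, p2⟩ := mb_data v hv
      refine ⟨![-v 0, -v 1, v 2], ?_, ?_⟩
      · refine mem_mb (-a0) (-b0) (-a1) (-b1) a2 b2 _ ?_ ?_ ?_ (by omega) (by omega)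
        · show -v 0 = _; rw [h0]; push_cast; ring
        · show -v 1 = _; rw [h1]; push_cast; ring
        · show v 2 = _; rw [h2]
      · show R2.mulVec _ = v
        rw [mulVec_R2]
        funext i
        fin_cases i <;> simp
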